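/- arXiv:1208.1100 — 4 statements merged into one kernel-verified Lean document; each statement's English description precedes it below -/
import Mathlib

section
/- Let f : [0,1] → ℝ be a continuous function, let t₀ ∈ [0,1] be such that f(t₀) ≠ 0, and let Z = {Z(t)}_{t∈[0,1]} be a real-valued stochastic process such that for all t₁, t₂ ∈ [0,1], the increment Z(t₁) − Z(t₂) has the centered Gaussian law N(0, ∫_{min(t₁,t₂)}^{max(t₁,t₂)} f(s)² ds). Then almost surely, for every ε > 0 there exists a sequence (r_k)_{k∈ℕ} of nonzero real numbers converging to 0, with t₀ + r_k ∈ [0,1] for all k, such that |Z(t₀ + r_k) − Z(t₀)| / |r_k|^{1/2 + ε} → +∞ as k → ∞. In particular, with probability 1 the pointwise Hölder exponent of Z at t₀ is at most 1/2. -/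
open MeasureTheory ProbabilityTheory Set Filter Real
open scoped NNReal ENNReal

set_option maxHeartbeats 1000000

lemma gauss_small (v : ℝ≥0) (hv : v ≠ 0) (a : ℝ) (ha : 0 ≤ a) :
    gaussianReal 0 v {x : ℝ | |x| ≤ a} ≤ ENNReal.ofReal (a / Real.sqrt v) := by
  have hvpos : (0:ℝ) < v := lt_of_le_of_ne v.coe_nonneg (by exact_mod_cast hv.symm)
  rw [gaussianReal_apply_eq_integral 0 hv]
  apply ENNReal.ofReal_le_ofReal
  have hset : {x : ℝ | |x| ≤ a} = Set.Icc (-a) a := by ext x; simp [abs_le]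
  rw [hset]
  have hC : (0:ℝ) < Real.sqrt (2 * π * v) := Real.sqrt_pos.2 (by positivity)
  have hbd : ∀ x ∈ Set.Icc (-a) a, gaussianPDFReal 0 v x ≤ (Real.sqrt (2 * π * v))⁻¹ := by
    intro x _
    rw [gaussianPDFReal]
    have : Real.exp (-(x - 0)^2 / (2 * v)) ≤ 1 := by
      rw [Real.exp_le_one_iff]
      apply div_nonpos_of_nonpos_of_nonneg
      · simp [sq_nonneg]
      · positivity
    calc (Real.sqrt (2 * π * v))⁻¹ * Real.exp (-(x - 0)^2 / (2 * v))
        ≤ (Real.sqrt (2 * π * v))⁻¹ * 1 := by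
          apply mul_le_mul_of_nonneg_left this (by positivity)
      _ = _ := by ring
  have h1 : ∫ x in Set.Icc (-a) a, gaussianPDFReal 0 v x
      ≤ ∫ _x in Set.Icc (-a) a, (Real.sqrt (2 * π * v))⁻¹ := by
    apply setIntegral_mono_on
    · exact (integrable_gaussianPDFReal 0 v).integrableOn
    · exact integrableOn_const measure_Icc_lt_top.ne
    · exact measurableSet_Icc
    · exact hbd
  have h2 : ∫ _x in Set.Icc (-a) a, (Real.sqrt (2 * π * v))⁻¹
      = (2 * a) * (Real.sqrt (2 * π * v))⁻¹ := by
    rw [setIntegral_const, measureReal_def, Real.volume_Icc, smul_eq_mul]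
    congr 1
    rw [ENNReal.toReal_ofReal (by linarith)]
    ring
  have h3 : (2 * a) * (Real.sqrt (2 * π * v))⁻¹ ≤ a / Real.sqrt v := by
    have hsv : (0:ℝ) < Real.sqrt v := Real.sqrt_pos.2 hvpos
    have h2pi : (2:ℝ) * Real.sqrt v ≤ Real.sqrt (2 * π * v) := by
      have : Real.sqrt (2 * π * v) = Real.sqrt (2 * π) * Real.sqrt v := by
        rw [← Real.sqrt_mul (by positivity)]
      rw [this]
      gcongr
      have : (4:ℝ) ≤ 2 * π := by nlinarith [Real.pi_gt_three]
      calc (2:ℝ) = Real.sqrt 4 := by rw [show (4:ℝ) = 2^2 by norm_num, Real.sqrt_sq (by norm_num)]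
        _ ≤ Real.sqrt (2 * π) := Real.sqrt_le_sqrt this
    rw [div_eq_mul_inv]
    calc (2 * a) * (Real.sqrt (2 * π * v))⁻¹ ≤ (2 * a) * (2 * Real.sqrt v)⁻¹ := by
          exact mul_le_mul_of_nonneg_left (inv_anti₀ (by positivity) h2pi) (by linarith)
      _ = a * (Real.sqrt v)⁻¹ := by field_simp
  linarith

lemma var_lower {f : ℝ → ℝ} (hf : ContinuousOn f (Set.Icc 0 1)) {a b c : ℝ} (hab : a ≤ b)
    (hsub : Set.Icc a b ⊆ Set.Icc 0 1) (hc : ∀ s ∈ Set.Icc a b, c ≤ f s ^ 2) :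
    c * (b - a) ≤ ∫ s in a..b, f s ^ 2 := by
  have hint : IntervalIntegrable (fun s => f s ^ 2) MeasureTheory.volume a b := by
    apply ContinuousOn.intervalIntegrable_of_Icc hab
    exact ((hf.mono hsub).pow 2)
  have h := intervalIntegral.integral_mono_on hab (intervalIntegrable_const (c := c)) hint hc
  rwa [intervalIntegral.integral_const, smul_eq_mul, mul_comm] at h


/-- The pointwise Hölder exponent of `Y : ℝ → ℝ` at `t₀`, relative to the interval `[0,1]`:
`ρ_Y(t₀) = sup {ρ ∈ [0,1] : (Y(t₀+h) − Y(t₀))/|h|^ρ → 0 as h → 0, h ≠ 0, t₀+h ∈ [0,1]}`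
(with the convention `sup ∅ = 0`, which is `Real.sSup`'s convention). -/
noncomputable def pointwiseHolderExp (Y : ℝ → ℝ) (t₀ : ℝ) : ℝ :=
  sSup {ρ : ℝ | ρ ∈ Set.Icc (0 : ℝ) 1 ∧
    Tendsto (fun h : ℝ => (Y (t₀ + h) - Y t₀) / |h| ^ ρ)
      (nhdsWithin 0 {h : ℝ | h ≠ 0 ∧ t₀ + h ∈ Set.Icc (0 : ℝ) 1}) (nhds 0)}

/-- Under the Gaussian-increment assumption with continuous `f` and `f(t₀) ≠ 0`,
almost surely, for every `ε > 0` there is a sequence of nonzero reals `r_k → 0` with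
`t₀ + r_k ∈ [0,1]` such that `|Z(t₀+r_k) − Z(t₀)|/|r_k|^{1/2+ε} → +∞`; in particular, almost
surely the pointwise Hölder exponent of `Z` at `t₀` is at most `1/2`. -/
theorem statement5 {Ω : Type*} [MeasurableSpace Ω] (P : Measure Ω) [IsProbabilityMeasure P]
    (f : ℝ → ℝ) (hf : ContinuousOn f (Set.Icc 0 1))
    (t₀ : ℝ) (ht₀ : t₀ ∈ Set.Icc (0 : ℝ) 1) (hft₀ : f t₀ ≠ 0)
    (Z : ℝ → Ω → ℝ) (hZmeas : ∀ t, Measurable (Z t))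
    (hlaw : ∀ t₁ ∈ Set.Icc (0 : ℝ) 1, ∀ t₂ ∈ Set.Icc (0 : ℝ) 1,
      Measure.map (fun ω => Z t₁ ω - Z t₂ ω) P =
        gaussianReal 0 (∫ s in min t₁ t₂..max t₁ t₂, (f s) ^ 2).toNNReal) :
    ∀ᵐ ω ∂P,
      (∀ ε : ℝ, 0 < ε →
        ∃ r : ℕ → ℝ, (∀ k, r k ≠ 0) ∧ Tendsto r atTop (nhds 0) ∧
          (∀ k, t₀ + r k ∈ Set.Icc (0 : ℝ) 1) ∧
          Tendsto
            (fun k => |Z (t₀ + r k) ω - Z t₀ ω| / |r k| ^ ((1 : ℝ) / 2 + ε))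
            atTop atTop) ∧
      pointwiseHolderExp (fun t => Z t ω) t₀ ≤ 1 / 2 := by
  obtain ⟨ht0, ht1⟩ := ht₀
  set c : ℝ := f t₀ ^ 2 / 2 with hc_def
  have hcpos : 0 < c := by positivity
  -- a neighborhood where f² ≥ c
  obtain ⟨δ, hδpos, hδ⟩ : ∃ δ > 0, ∀ s ∈ Set.Icc (0:ℝ) 1, |s - t₀| < δ → c ≤ f s ^ 2 := by
    have hcont : ContinuousWithinAt (fun s => f s ^ 2) (Set.Icc 0 1) t₀ :=
      (hf.pow 2) t₀ ⟨ht0, ht1⟩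
    have hlt : c < f t₀ ^ 2 := by
      have hp : 0 < f t₀ ^ 2 := by positivity
      rw [hc_def]; linarith
    have hev : ∀ᶠ s in nhdsWithin t₀ (Set.Icc 0 1), c < f s ^ 2 :=
      hcont (Ioi_mem_nhds hlt)
    rw [eventually_iff, Metric.mem_nhdsWithin_iff] at hev
    obtain ⟨δ, hδpos, hδ⟩ := hev
    refine ⟨δ, hδpos, fun s hs hd => ?_⟩
    exact (hδ ⟨by rwa [Metric.mem_ball, Real.dist_eq], hs⟩).le
  -- the approach sequence
  set d : ℝ := if t₀ ≤ 1/2 then 1 else -1 with hd_def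
  set g : ℕ → ℝ := fun n => d * (1/2)^(n+1) with hg_def
  have hdabs : |d| = 1 := by rw [hd_def]; split_ifs <;> norm_num
  have habs : ∀ n, |g n| = (1/2:ℝ)^(n+1) := by
    intro n
    rw [hg_def]
    simp only
    rw [abs_mul, hdabs, one_mul, abs_pow]
    norm_num
  have hgpos : ∀ n, 0 < |g n| := by intro n; rw [habs]; positivity
  have hgne : ∀ n, g n ≠ 0 := fun n => abs_pos.1 (hgpos n)
  have hpowle : ∀ n : ℕ, ((1:ℝ)/2)^(n+1) ≤ 1/2 := by
    intro n
    calc ((1:ℝ)/2)^(n+1) ≤ ((1:ℝ)/2)^1 :=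
          pow_le_pow_of_le_one (by norm_num) (by norm_num) (by omega)
      _ = 1/2 := pow_one _
  have hgle : ∀ n, |g n| ≤ 1/2 := by intro n; rw [habs]; exact hpowle n
  have hmem01 : ∀ n, t₀ + g n ∈ Set.Icc (0:ℝ) 1 := by
    intro n
    have hp : (0:ℝ) < (1/2:ℝ)^(n+1) := by positivity
    have hp2 := hpowle n
    rw [hg_def, hd_def]
    simp only
    split_ifs with hle
    · constructor <;> [nlinarith; nlinarith]
    · push_neg at hle
      constructor <;> [nlinarith; nlinarith]
  have hgtend : Tendsto g atTop (nhds 0) := by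
    have h1 : Tendsto (fun n : ℕ => ((1:ℝ)/2)^(n+1)) atTop (nhds 0) := by
      have := tendsto_pow_atTop_nhds_zero_of_lt_one (by norm_num : (0:ℝ) ≤ 1/2)
        (by norm_num : (1:ℝ)/2 < 1)
      exact this.comp (tendsto_add_atTop_nat 1)
    have h2 := h1.const_mul d
    rw [mul_zero] at h2
    exact h2
  -- variance lower bound
  obtain ⟨N, hN⟩ : ∃ N : ℕ, ((1:ℝ)/2)^N < δ := exists_pow_lt_of_lt_one hδpos (by norm_num)
  set I : ℕ → ℝ := fun n => ∫ s in min (t₀ + g n) t₀..max (t₀ + g n) t₀, f s ^ 2 with hI_def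
  have hgδ : ∀ n, N ≤ n → |g n| < δ := by
    intro n hn
    rw [habs]
    calc ((1:ℝ)/2)^(n+1) ≤ ((1:ℝ)/2)^N :=
          pow_le_pow_of_le_one (by norm_num) (by norm_num) (by omega)
      _ < δ := hN
  have hIlow : ∀ n, N ≤ n → c * |g n| ≤ I n := by
    intro n hn
    have hminmax : min (t₀ + g n) t₀ ≤ max (t₀ + g n) t₀ := min_le_max
    have hsub : Set.Icc (min (t₀ + g n) t₀) (max (t₀ + g n) t₀) ⊆ Set.Icc 0 1 := by
      intro s hs
      obtain ⟨h1, h2⟩ := hs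
      obtain ⟨ha1, ha2⟩ := hmem01 n
      constructor
      · calc (0:ℝ) ≤ min (t₀ + g n) t₀ := le_min ha1 ht0
          _ ≤ s := h1
      · calc s ≤ max (t₀ + g n) t₀ := h2
          _ ≤ 1 := max_le ha2 ht1
    have hdiff : max (t₀ + g n) t₀ - min (t₀ + g n) t₀ = |g n| := by
      rw [max_sub_min_eq_abs, abs_sub_comm, add_sub_cancel_left]
    have hc2 : ∀ s ∈ Set.Icc (min (t₀ + g n) t₀) (max (t₀ + g n) t₀), c ≤ f s ^ 2 := by
      intro s hs
      apply hδ s (hsub hs)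
      obtain ⟨h1, h2⟩ := hs
      have hm1 : min (t₀ + g n) t₀ ≤ t₀ := min_le_right _ _
      have hm2 : t₀ ≤ max (t₀ + g n) t₀ := le_max_right _ _
      rw [abs_lt]
      constructor
      · have : min (t₀ + g n) t₀ - max (t₀ + g n) t₀ ≤ s - t₀ := by linarith
        have h3 := hgδ n hn
        nlinarith [abs_nonneg (g n)]
      · have h3 := hgδ n hn
        nlinarith [abs_nonneg (g n)]
    have := var_lower hf hminmax hsub hc2
    rwa [hdiff] at this
  have hIpos : ∀ n, N ≤ n → 0 < I n := fun n hn =>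
    lt_of_lt_of_le (by positivity : 0 < c * |g n|) (hIlow n hn)
  -- per-m Borel-Cantelli
  have key : ∀ m : ℕ, ∀ᵐ ω ∂P, ∀ᶠ n : ℕ in atTop,
      (n:ℝ) * |g n| ^ ((1:ℝ)/2 + 1/((m:ℝ)+1)) < |Z (t₀ + g n) ω - Z t₀ ω| := by
    intro m
    set ε : ℝ := 1/((m:ℝ)+1) with hε_def
    have hεpos : 0 < ε := by positivity
    set q : ℝ := (1/2:ℝ) ^ ε with hq_def
    have hq0 : 0 < q := Real.rpow_pos_of_pos (by norm_num) _
    have hq1 : q < 1 := Real.rpow_lt_one (by norm_num) (by norm_num) hεpos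
    set A : ℕ → Set Ω := fun n =>
      {ω | |Z (t₀ + g n) ω - Z t₀ ω| ≤ (n:ℝ) * |g n| ^ ((1:ℝ)/2 + ε)} with hA_def
    have hbound : ∀ n, N ≤ n →
        P (A n) ≤ ENNReal.ofReal ((n:ℝ) * q ^ n / Real.sqrt c) := by
      intro n hn
      set a : ℝ := (n:ℝ) * |g n| ^ ((1:ℝ)/2 + ε) with ha_def
      have ha : 0 ≤ a := by
        apply mul_nonneg (Nat.cast_nonneg n)
        exact (Real.rpow_pos_of_pos (hgpos n) _).le
      have hmeas : Measurable (fun ω => Z (t₀ + g n) ω - Z t₀ ω) :=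
        (hZmeas _).sub (hZmeas t₀)
      have hset : MeasurableSet {x : ℝ | |x| ≤ a} :=
        (isClosed_le continuous_abs continuous_const).measurableSet
      have hPA : P (A n) =
          Measure.map (fun ω => Z (t₀ + g n) ω - Z t₀ ω) P {x : ℝ | |x| ≤ a} := by
        rw [Measure.map_apply hmeas hset]
        rfl
      have hvpos : 0 < I n := hIpos n hn
      have hvne : (I n).toNNReal ≠ 0 := by
        simp only [ne_eq, ← NNReal.coe_eq_zero]
        rw [Real.coe_toNNReal _ hvpos.le]
        exact hvpos.ne'
      rw [hPA, hlaw (t₀ + g n) (hmem01 n) t₀ ⟨ht0, ht1⟩]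
      refine le_trans (gauss_small _ hvne a ha) (ENNReal.ofReal_le_ofReal ?_)
      have hcoe : ((I n).toNNReal : ℝ) = I n := Real.coe_toNNReal _ hvpos.le
      have hsqrt1 : Real.sqrt (c * |g n|) ≤ Real.sqrt ((I n).toNNReal : ℝ) := by
        rw [hcoe]; exact Real.sqrt_le_sqrt (hIlow n hn)
      have hsc : (0:ℝ) < Real.sqrt c := Real.sqrt_pos.2 hcpos
      have hsg : (0:ℝ) < Real.sqrt |g n| := Real.sqrt_pos.2 (hgpos n)
      have hscg : (0:ℝ) < Real.sqrt (c * |g n|) := Real.sqrt_pos.2 (by positivity)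
      have hpowε : |g n| ^ ε = q ^ (n+1) := by
        rw [habs n, hq_def, ← Real.rpow_natCast (1/2 : ℝ) (n+1),
          ← Real.rpow_mul (by norm_num), mul_comm,
          Real.rpow_mul (by norm_num), Real.rpow_natCast]
      have hsplit : a = (n:ℝ) * (Real.sqrt |g n| * q ^ (n+1)) := by
        rw [ha_def, Real.rpow_add (hgpos n), ← hpowε]
        congr 2
        rw [Real.sqrt_eq_rpow]
      calc a / Real.sqrt ((I n).toNNReal : ℝ)
          ≤ a / Real.sqrt (c * |g n|) := by
            apply div_le_div_of_nonneg_left ha hscg hsqrt1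
        _ = (n:ℝ) * q ^ (n+1) / Real.sqrt c := by
            rw [hsplit, Real.sqrt_mul hcpos.le]
            field_simp
        _ ≤ (n:ℝ) * q ^ n / Real.sqrt c := by
            have hq' : q^(n+1) ≤ q^n := pow_le_pow_of_le_one hq0.le hq1.le (Nat.le_succ n)
            exact (div_le_div_iff_of_pos_right hsc).2 (mul_le_mul_of_nonneg_left hq' (Nat.cast_nonneg n))
    -- summability
    have hsumF : Summable (fun n : ℕ => (n:ℝ) * q ^ n / Real.sqrt c) := by
      have h := summable_pow_mul_geometric_of_norm_lt_one 1
        (by rw [Real.norm_eq_abs, abs_of_pos hq0]; exact hq1)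
      have := h.mul_right (Real.sqrt c)⁻¹
      refine this.congr fun n => ?_
      rw [pow_one]
      rw [div_eq_mul_inv]
    have hsumF' : Summable (fun n : ℕ => ((n + N : ℕ):ℝ) * q ^ (n + N) / Real.sqrt c) :=
      (summable_nat_add_iff N).2 hsumF
    have hFnonneg : ∀ n : ℕ, 0 ≤ ((n + N : ℕ):ℝ) * q ^ (n + N) / Real.sqrt c := by
      intro n; positivity
    have htsum : (∑' n : ℕ, P (A (n + N))) ≠ ⊤ := by
      have h1 : (∑' n : ℕ, P (A (n + N))) ≤
          ∑' n : ℕ, ENNReal.ofReal (((n + N : ℕ):ℝ) * q ^ (n + N) / Real.sqrt c) :=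
        ENNReal.tsum_le_tsum fun n => hbound (n + N) (Nat.le_add_left N n)
      rw [← ENNReal.ofReal_tsum_of_nonneg hFnonneg hsumF'] at h1
      exact ne_top_of_le_ne_top ENNReal.ofReal_ne_top h1
    have hae := ae_eventually_notMem htsum
    filter_upwards [hae] with ω hω
    rw [eventually_atTop] at hω ⊢
    obtain ⟨k, hk⟩ := hω
    refine ⟨k + N, fun n hn => ?_⟩
    have h2 := hk (n - N) (by omega)
    rw [show n - N + N = n by omega] at h2
    exact lt_of_not_ge h2
  have bigae : ∀ᵐ ω ∂P, ∀ m : ℕ, ∀ᶠ n : ℕ in atTop,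
      (n:ℝ) * |g n| ^ ((1:ℝ)/2 + 1/((m:ℝ)+1)) < |Z (t₀ + g n) ω - Z t₀ ω| :=
    (ae_all_iff).2 key
  filter_upwards [bigae] with ω hω
  have main : ∀ ε : ℝ, 0 < ε →
      ∃ r : ℕ → ℝ, (∀ k, r k ≠ 0) ∧ Tendsto r atTop (nhds 0) ∧
        (∀ k, t₀ + r k ∈ Set.Icc (0 : ℝ) 1) ∧
        Tendsto (fun k => |Z (t₀ + r k) ω - Z t₀ ω| / |r k| ^ ((1 : ℝ) / 2 + ε))
          atTop atTop := by
    intro ε hε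
    obtain ⟨m, hm⟩ : ∃ m : ℕ, 1/((m:ℝ)+1) ≤ ε := by
      obtain ⟨m, hm⟩ := exists_nat_gt (1/ε)
      refine ⟨m, ?_⟩
      have hm1 : (0:ℝ) < (m:ℝ) + 1 := by positivity
      rw [div_le_iff₀ hm1]
      rw [div_lt_iff₀ hε] at hm
      nlinarith
    refine ⟨g, hgne, hgtend, hmem01, ?_⟩
    apply tendsto_atTop_mono' atTop ?_ tendsto_natCast_atTop_atTop
    filter_upwards [hω m] with n hn
    have hd1 : 0 < |g n| ^ ((1:ℝ)/2 + ε) := Real.rpow_pos_of_pos (hgpos n) _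
    have hd2 : 0 < |g n| ^ ((1:ℝ)/2 + 1/((m:ℝ)+1)) := Real.rpow_pos_of_pos (hgpos n) _
    have hmono : |g n| ^ ((1:ℝ)/2 + ε) ≤ |g n| ^ ((1:ℝ)/2 + 1/((m:ℝ)+1)) :=
      Real.rpow_le_rpow_of_exponent_ge (hgpos n) (by linarith [hgle n]) (by linarith)
    calc (n:ℝ) ≤ |Z (t₀ + g n) ω - Z t₀ ω| / |g n| ^ ((1:ℝ)/2 + 1/((m:ℝ)+1)) :=
          (le_div_iff₀ hd2).2 hn.le
      _ ≤ |Z (t₀ + g n) ω - Z t₀ ω| / |g n| ^ ((1:ℝ)/2 + ε) := by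
          apply div_le_div_of_nonneg_left (abs_nonneg _) hd1 hmono
  refine ⟨main, ?_⟩
  apply Real.sSup_le _ (by norm_num)
  rintro ρ ⟨⟨hρ0, hρ1⟩, htend⟩
  by_contra hgt
  push_neg at hgt
  obtain ⟨r, hrne, hr0, hrmem, hrtop⟩ := main (ρ - 1/2) (by linarith)
  have hρeq : (1:ℝ)/2 + (ρ - 1/2) = ρ := by ring
  rw [hρeq] at hrtop
  have hcomp : Tendsto (fun k => (Z (t₀ + r k) ω - Z t₀ ω) / |r k| ^ ρ) atTop (nhds 0) := by
    apply htend.comp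
    apply tendsto_nhdsWithin_of_tendsto_nhds_of_eventually_within _ hr0
    exact Eventually.of_forall fun k => ⟨hrne k, hrmem k⟩
  have habs2 : Tendsto (fun k => |Z (t₀ + r k) ω - Z t₀ ω| / |r k| ^ ρ) atTop (nhds 0) := by
    have := hcomp.abs
    simp only [abs_div, abs_abs, abs_of_nonneg (Real.rpow_nonneg (abs_nonneg _) ρ)] at this
    simpa using this
  exact absurd habs2 (not_tendsto_nhds_of_tendsto_atTop hrtop 0)
end

section
/- Let f : [0,1] → ℝ be a continuous function, let t₀ ∈ [0,1] be such that f(t₀) ≠ 0, and let Z = {Z(t)}_{t∈[0,1]} be a real-valued stochastic process such that: (a) for all t₁, t₂ ∈ [0,1], the increment Z(t₁) − Z(t₂) has the centered Gaussian law N(0, ∫_{min(t₁,t₂)}^{max(t₁,t₂)} f(s)² ds); and (b) with probability 1, for every γ ∈ (0, 1/2) the trajectory t ↦ Z(t, ω) is γ-Hölder continuous on [0,1]. Then ℙ(ρ_Z(t₀) = 1/2) = 1, where ρ_Z(t₀) denotes the pointwise Hölder exponent of the trajectory of Z at t₀. -/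
open MeasureTheory ProbabilityTheory Set Filter


lemma gauss_Icc_le (v : NNReal) (hv : v ≠ 0) (a : ℝ) :
    gaussianReal 0 v (Set.Icc (-a) a)
      ≤ ENNReal.ofReal (2 * a * (Real.sqrt (2 * Real.pi * v))⁻¹) := by
  rw [gaussianReal_apply 0 hv]
  calc ∫⁻ x in Set.Icc (-a) a, gaussianPDF 0 v x
      ≤ ∫⁻ _ in Set.Icc (-a) a, ENNReal.ofReal ((Real.sqrt (2 * Real.pi * v))⁻¹) := by
        refine setLIntegral_mono measurable_const (fun x _ => ?_)
        refine ENNReal.ofReal_le_ofReal ?_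
        unfold gaussianPDFReal
        refine mul_le_of_le_one_right (by positivity) ?_
        refine Real.exp_le_one_iff.mpr ?_
        apply div_nonpos_of_nonpos_of_nonneg
        · simp [sq_nonneg]
        · positivity
    _ = ENNReal.ofReal ((Real.sqrt (2 * Real.pi * v))⁻¹) * volume (Set.Icc (-a) a) := by
        rw [setLIntegral_const]
    _ ≤ ENNReal.ofReal (2 * a * (Real.sqrt (2 * Real.pi * v))⁻¹) := by
        rw [Real.volume_Icc, ← ENNReal.ofReal_mul (by positivity)]
        apply ENNReal.ofReal_le_ofReal
        nlinarith [Real.sqrt_nonneg (2 * Real.pi * (v:ℝ)), inv_nonneg.mpr (Real.sqrt_nonneg (2 * Real.pi * (v:ℝ)))]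

lemma tendsto_exponent_mono {Y : ℝ → ℝ} {t₀ : ℝ} {T : Set ℝ} (hT : ∀ h ∈ T, h ≠ 0) {ρ q : ℝ}
    (hq : q ≤ ρ)
    (h : Tendsto (fun h => (Y (t₀ + h) - Y t₀) / |h| ^ ρ) (nhdsWithin 0 T) (nhds 0)) :
    Tendsto (fun h => (Y (t₀ + h) - Y t₀) / |h| ^ q) (nhdsWithin 0 T) (nhds 0) := by
  rcases eq_or_lt_of_le hq with rfl | hlt
  · exact h
  have h2 : Tendsto (fun h : ℝ => |h| ^ (ρ - q)) (nhdsWithin 0 T) (nhds 0) := by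
    apply tendsto_nhdsWithin_of_tendsto_nhds
    have : ContinuousAt (fun x : ℝ => |x| ^ (ρ - q)) 0 := by
      exact (Real.continuousAt_rpow_const _ _ (Or.inr (by linarith))).comp
        continuous_abs.continuousAt
    simpa [Real.zero_rpow (show ρ - q ≠ 0 by linarith)] using this.tendsto
  have := h.mul h2
  rw [mul_zero] at this
  refine this.congr' ?_
  filter_upwards [eventually_mem_nhdsWithin] with h hh
  have hpos : (0:ℝ) < |h| := abs_pos.mpr (hT h hh)
  have e : |h| ^ ρ = |h| ^ q * |h| ^ (ρ - q) := by
    rw [← Real.rpow_add hpos]; ring_nf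
  rw [e, ← div_div, div_mul_cancel₀]
  exact (Real.rpow_pos_of_pos hpos _).ne'

lemma lower_mem {Y : ℝ → ℝ} {t₀ : ℝ} (ht₀ : t₀ ∈ Set.Icc (0:ℝ) 1)
    (hH : ∀ γ ∈ Set.Ioo (0:ℝ) (1/2), ∃ C : ℝ, ∀ t₁ ∈ Set.Icc (0:ℝ) 1, ∀ t₂ ∈ Set.Icc (0:ℝ) 1,
      |Y t₁ - Y t₂| ≤ C * |t₁ - t₂| ^ γ)
    {ρ : ℝ} (h0 : 0 ≤ ρ) (h1 : ρ < 1/2) :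
    Tendsto (fun h : ℝ => (Y (t₀ + h) - Y t₀) / |h| ^ ρ)
      (nhdsWithin 0 {h : ℝ | h ≠ 0 ∧ t₀ + h ∈ Set.Icc (0:ℝ) 1}) (nhds 0) := by
  set γ := (ρ + 1/2) / 2 with hγdef
  have hγ : γ ∈ Set.Ioo (0:ℝ) (1/2) := ⟨by positivity, by rw [hγdef]; linarith⟩
  have hργ : ρ < γ := by rw [hγdef]; linarith
  obtain ⟨C, hC⟩ := hH γ hγ
  have hbound : Tendsto (fun h : ℝ => |C| * |h| ^ (γ - ρ))
      (nhdsWithin 0 {h : ℝ | h ≠ 0 ∧ t₀ + h ∈ Set.Icc (0:ℝ) 1}) (nhds 0) := by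
    apply tendsto_nhdsWithin_of_tendsto_nhds
    have hc : ContinuousAt (fun x : ℝ => |C| * |x| ^ (γ - ρ)) 0 :=
      ContinuousAt.mul continuousAt_const
        ((Real.continuousAt_rpow_const _ _ (Or.inr (by linarith))).comp
          continuous_abs.continuousAt)
    simpa [Real.zero_rpow (show γ - ρ ≠ 0 by linarith)] using hc.tendsto
  refine squeeze_zero_norm' ?_ hbound
  filter_upwards [eventually_mem_nhdsWithin] with h hh
  obtain ⟨hne, hmem⟩ := hh
  have hpos : (0:ℝ) < |h| := abs_pos.mpr hne
  have key : |Y (t₀ + h) - Y t₀| ≤ |C| * |h| ^ γ := by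
    have := hC (t₀ + h) hmem t₀ ht₀
    have he : |t₀ + h - t₀| = |h| := by ring_nf
    rw [he] at this
    refine this.trans ?_
    exact mul_le_mul_of_nonneg_right (le_abs_self C) (Real.rpow_nonneg hpos.le _)
  rw [Real.norm_eq_abs, abs_div, abs_of_nonneg (Real.rpow_nonneg hpos.le ρ)]
  rw [div_le_iff₀ (Real.rpow_pos_of_pos hpos ρ)]
  calc |Y (t₀ + h) - Y t₀| ≤ |C| * |h| ^ γ := key
    _ = |C| * |h| ^ (γ - ρ) * |h| ^ ρ := by
        rw [mul_assoc, ← Real.rpow_add hpos]; ring_nf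

lemma upper_null {Ω : Type*} [MeasurableSpace Ω] (P : Measure Ω) [IsProbabilityMeasure P]
    (f : ℝ → ℝ) (hf : ContinuousOn f (Set.Icc 0 1))
    (t₀ : ℝ) (ht₀ : t₀ ∈ Set.Icc (0 : ℝ) 1) (hft₀ : f t₀ ≠ 0)
    (Z : ℝ → Ω → ℝ) (hZmeas : ∀ t, Measurable (Z t))
    (hlaw : ∀ t₁ ∈ Set.Icc (0 : ℝ) 1, ∀ t₂ ∈ Set.Icc (0 : ℝ) 1,
      Measure.map (fun ω => Z t₁ ω - Z t₂ ω) P =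
        gaussianReal 0 (∫ s in min t₁ t₂..max t₁ t₂, (f s) ^ 2).toNNReal)
    (q : ℝ) (hq : 1/2 < q) :
    ∀ᵐ ω ∂P, ¬ Tendsto (fun h : ℝ => (Z (t₀ + h) ω - Z t₀ ω) / |h| ^ q)
      (nhdsWithin 0 {h : ℝ | h ≠ 0 ∧ t₀ + h ∈ Set.Icc (0:ℝ) 1}) (nhds 0) := by
  classical
  set e : ℝ := if t₀ ≤ 1/2 then 1 else -1 with he_def
  have he : e = 1 ∨ e = -1 := by unfold e; split <;> simp
  have hene : e ≠ 0 := by rcases he with h | h <;> rw [h] <;> norm_num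
  have habse : |e| = 1 := by rcases he with h | h <;> rw [h] <;> norm_num
  have hmem : ∀ n : ℕ, 2 ≤ n → t₀ + e / n ∈ Set.Icc (0:ℝ) 1 := by
    intro n hn
    have hn2 : (2:ℝ) ≤ (n:ℝ) := by exact_mod_cast hn
    have hn0 : (0:ℝ) < (n:ℝ) := by linarith
    have h1 : (0:ℝ) < (n:ℝ)⁻¹ := by positivity
    have h2 : (n:ℝ)⁻¹ ≤ 2⁻¹ := inv_anti₀ (by norm_num) hn2
    by_cases h : t₀ ≤ 1/2
    · have he1 : e = 1 := if_pos h
      rw [he1]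
      have hd : (1:ℝ)/(n:ℝ) = (n:ℝ)⁻¹ := one_div _
      rw [hd]
      exact ⟨by linarith [ht₀.1], by linarith⟩
    · have he1 : e = -1 := if_neg h
      push_neg at h
      rw [he1]
      have hd : (-1:ℝ)/(n:ℝ) = -((n:ℝ)⁻¹) := by rw [neg_div, one_div]
      rw [hd]
      exact ⟨by linarith, by linarith [ht₀.2]⟩
  have habs : ∀ n : ℕ, |e / (n:ℝ)| = ((n:ℝ))⁻¹ := by
    intro n
    rw [abs_div, habse, Nat.abs_cast, one_div]
  -- continuity: lower bound for f^2 near t₀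
  set c : ℝ := f t₀ ^ 2 / 4 with hc_def
  have hc : 0 < c := by positivity
  obtain ⟨δ, hδ, hδ'⟩ : ∃ δ > 0, ∀ s ∈ Set.Icc (0:ℝ) 1, |s - t₀| < δ → c ≤ f s ^ 2 := by
    have hcw := hf t₀ ht₀
    rw [Metric.continuousWithinAt_iff] at hcw
    obtain ⟨δ, hδ, hδ'⟩ := hcw (|f t₀| / 2) (by positivity)
    refine ⟨δ, hδ, fun s hs hsd => ?_⟩
    have := hδ' hs (by rwa [Real.dist_eq])
    rw [Real.dist_eq] at this
    have h1 : |f t₀| - |f s| ≤ |f s - f t₀| := by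
      have := abs_sub_abs_le_abs_sub (f t₀) (f s); rwa [abs_sub_comm] at this
    have h2 : |f t₀| / 2 ≤ |f s| := by linarith
    have h3 : (|f t₀| / 2) ^ 2 ≤ |f s| ^ 2 := by
      apply pow_le_pow_left₀ (by positivity) h2
    rw [sq_abs] at h3
    rw [hc_def]
    nlinarith [sq_abs (f t₀)]
  -- choose N₁
  obtain ⟨N₀, hN₀⟩ := exists_nat_gt (1/δ)
  set N₁ : ℕ := max 2 N₀ with hN₁_def
  -- variance lower bound
  have hvar : ∀ n : ℕ, N₁ ≤ n →
      c * (n:ℝ)⁻¹ ≤ ∫ s in min (t₀ + e/n) t₀..max (t₀ + e/n) t₀, f s ^ 2 := by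
    intro n hn
    have hn2 : 2 ≤ n := le_trans (le_max_left _ _) hn
    have hnN₀ : N₀ ≤ n := le_trans (le_max_right _ _) hn
    have hn0 : (0:ℝ) < (n:ℝ) := by positivity
    have hδn : (n:ℝ)⁻¹ < δ := by
      have hgt : 1/δ < (n:ℝ) := lt_of_lt_of_le hN₀ (by exact_mod_cast hnN₀)
      rw [inv_lt_comm₀ hn0 hδ, ← one_div]
      exact hgt
    set α := min (t₀ + e/n) t₀ with hα
    set β := max (t₀ + e/n) t₀ with hβ
    have hαβ : α ≤ β := min_le_max
    have hlen : β - α = (n:ℝ)⁻¹ := by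
      rw [hα, hβ, max_sub_min_eq_abs, show t₀ - (t₀ + e/(n:ℝ)) = -(e/(n:ℝ)) by ring, abs_neg, habs]
    have hsn := hmem n hn2
    have hsub : Set.Icc α β ⊆ Set.Icc (0:ℝ) 1 := by
      intro s hs
      constructor
      · calc (0:ℝ) ≤ min (t₀ + e/n) t₀ := le_min hsn.1 ht₀.1
          _ ≤ s := hs.1
      · calc s ≤ β := hs.2
          _ ≤ 1 := max_le hsn.2 ht₀.2
    have hdist : ∀ s ∈ Set.Icc α β, |s - t₀| < δ := by
      intro s hs
      have h1 : α ≤ t₀ := min_le_right _ _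
      have h2 : t₀ ≤ β := le_max_right _ _
      rw [abs_lt]
      constructor
      · linarith [hs.1, hlen, hδn]
      · linarith [hs.2, hlen, hδn]
    have hint : IntervalIntegrable (fun s => f s ^ 2) volume α β := by
      apply ContinuousOn.intervalIntegrable
      apply ContinuousOn.pow
      apply hf.mono
      rwa [Set.uIcc_of_le hαβ]
    calc c * (n:ℝ)⁻¹ = ∫ _ in α..β, c := by
          rw [intervalIntegral.integral_const, smul_eq_mul, hlen, mul_comm]
      _ ≤ ∫ s in α..β, f s ^ 2 := by
          apply intervalIntegral.integral_mono_on hαβ intervalIntegrable_const hint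
          intro s hs
          exact hδ' s (hsub hs) (hdist s hs)
  -- the events
  set a : ℕ → ℝ := fun n => ((n:ℝ))⁻¹ ^ q with ha_def
  set B : ℕ → Set Ω := fun n => {ω | |Z (t₀ + e/n) ω - Z t₀ ω| ≤ a n} with hB_def
  -- probability bound
  set K : ℝ := 2 / Real.sqrt (2 * Real.pi * c) with hK_def
  have hPB : ∀ n : ℕ, N₁ ≤ n → P (B n) ≤ ENNReal.ofReal (K * (n:ℝ) ^ ((1:ℝ)/2 - q)) := by
    intro n hn
    have hn2 : 2 ≤ n := le_trans (le_max_left _ _) hn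
    have hn0 : (0:ℝ) < (n:ℝ) := by positivity
    set v : NNReal := (∫ s in min (t₀ + e/n) t₀..max (t₀ + e/n) t₀, f s ^ 2).toNNReal with hv_def
    have hvlb : c * (n:ℝ)⁻¹ ≤ (v:ℝ) := by
      rw [hv_def, Real.coe_toNNReal']
      exact le_max_of_le_left (hvar n hn)
    have hvne : v ≠ 0 := by
      intro h
      rw [h] at hvlb
      simp only [NNReal.coe_zero] at hvlb
      nlinarith [inv_pos.mpr hn0]
    have hBP : B n = (fun ω => Z (t₀ + e/n) ω - Z t₀ ω) ⁻¹' Set.Icc (-(a n)) (a n) := by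
      ext ω; simp [hB_def, abs_le]
    have hmap : P (B n) = gaussianReal 0 v (Set.Icc (-(a n)) (a n)) := by
      rw [hBP, ← Measure.map_apply (f := fun ω => Z (t₀ + e/n) ω - Z t₀ ω) ((hZmeas _).sub (hZmeas _)) measurableSet_Icc,
        hlaw _ (hmem n hn2) _ ht₀]
    rw [hmap]
    refine (gauss_Icc_le v hvne (a n)).trans ?_
    apply ENNReal.ofReal_le_ofReal
    have hvpos : (0:ℝ) < (v:ℝ) := lt_of_lt_of_le (by positivity) hvlb
    have hsa : Real.sqrt (2 * Real.pi * c * (n:ℝ)⁻¹) ≤ Real.sqrt (2 * Real.pi * (v:ℝ)) := by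
      apply Real.sqrt_le_sqrt
      nlinarith [Real.pi_pos]
    have hsqpos : (0:ℝ) < Real.sqrt (2 * Real.pi * c * (n:ℝ)⁻¹) := Real.sqrt_pos.mpr (by positivity)
    have hinv : (Real.sqrt (2 * Real.pi * (v:ℝ)))⁻¹ ≤ (Real.sqrt (2 * Real.pi * c * (n:ℝ)⁻¹))⁻¹ :=
      inv_anti₀ hsqpos hsa
    have heq : (2:ℝ) * a n * (Real.sqrt (2 * Real.pi * c * (n:ℝ)⁻¹))⁻¹ = K * (n:ℝ) ^ ((1:ℝ)/2 - q) := by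
      have h1 : a n = (n:ℝ) ^ (-q) := by
        simp only [ha_def]
        rw [Real.inv_rpow hn0.le, ← Real.rpow_neg hn0.le]
      have h2 : Real.sqrt (2 * Real.pi * c * (n:ℝ)⁻¹) = Real.sqrt (2 * Real.pi * c) * ((n:ℝ) ^ ((1:ℝ)/2))⁻¹ := by
        rw [Real.sqrt_mul (by positivity), Real.sqrt_inv, Real.sqrt_eq_rpow (n:ℝ)]
      have h3 : (n:ℝ) ^ ((1:ℝ)/2 - q) = (n:ℝ) ^ (-q) * (n:ℝ) ^ ((1:ℝ)/2) := by
        rw [← Real.rpow_add hn0]; ring_nf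
      have hr2 : (0:ℝ) < (n:ℝ) ^ ((1:ℝ)/2) := Real.rpow_pos_of_pos hn0 _
      have hs2 : (0:ℝ) < Real.sqrt (2 * Real.pi * c) := Real.sqrt_pos.mpr (by positivity)
      rw [h1, h2, h3, hK_def]
      field_simp
    calc 2 * a n * (Real.sqrt (2 * Real.pi * (v:ℝ)))⁻¹
        ≤ 2 * a n * (Real.sqrt (2 * Real.pi * c * (n:ℝ)⁻¹))⁻¹ := by
          apply mul_le_mul_of_nonneg_left hinv
          have : (0:ℝ) ≤ a n := Real.rpow_nonneg (by positivity) _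
          linarith
      _ = K * (n:ℝ) ^ ((1:ℝ)/2 - q) := heq
  -- the bound tends to zero
  have hbound_tendsto : Tendsto (fun n : ℕ => ENNReal.ofReal (K * (n:ℝ) ^ ((1:ℝ)/2 - q)))
      atTop (nhds 0) := by
    rw [← ENNReal.ofReal_zero]
    apply ENNReal.tendsto_ofReal
    have h1 : Tendsto (fun x : ℝ => x ^ (-(q - 1/2))) atTop (nhds 0) :=
      tendsto_rpow_neg_atTop (by linarith)
    have h2 : Tendsto (fun n : ℕ => ((n:ℝ)) ^ ((1:ℝ)/2 - q)) atTop (nhds 0) := by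
      have := h1.comp tendsto_natCast_atTop_atTop
      simpa [show -(q - 1/2) = (1:ℝ)/2 - q by ring, Function.comp_def] using this
    simpa using h2.const_mul K
  -- intersection over tails is null
  have hInull : ∀ N : ℕ, P (⋂ n ∈ Set.Ici N, B n) = 0 := by
    intro N
    have hle : ∀ n, max N N₁ ≤ n →
        P (⋂ n ∈ Set.Ici N, B n) ≤ ENNReal.ofReal (K * (n:ℝ) ^ ((1:ℝ)/2 - q)) := by
      intro n hn
      refine le_trans (measure_mono ?_) (hPB n (le_trans (le_max_right _ _) hn))
      intro ω hω
      exact (Set.mem_iInter₂.mp hω) n (le_trans (le_max_left _ _) hn)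
    have h0 : P (⋂ n ∈ Set.Ici N, B n) ≤ 0 :=
      ge_of_tendsto hbound_tendsto (eventually_atTop.mpr ⟨max N N₁, hle⟩)
    exact le_antisymm h0 zero_le
  -- conclusion
  rw [ae_iff]
  simp only [not_not]
  apply measure_mono_null (t := ⋃ N : ℕ, ⋂ n ∈ Set.Ici N, B n)
  · intro ω hω
    simp only [Set.mem_setOf_eq] at hω
    have hseq : Tendsto (fun n : ℕ => e / (n:ℝ)) atTop
        (nhdsWithin 0 {h : ℝ | h ≠ 0 ∧ t₀ + h ∈ Set.Icc (0:ℝ) 1}) := by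
      rw [tendsto_nhdsWithin_iff]
      constructor
      · have h := tendsto_one_div_atTop_nhds_zero_nat.const_mul e
        simpa [div_eq_mul_inv, one_div, mul_zero] using h
      · filter_upwards [eventually_ge_atTop 2] with n hn
        have hn0 : ((n:ℝ)) ≠ 0 := Nat.cast_ne_zero.mpr (by omega)
        exact ⟨div_ne_zero hene hn0, hmem n hn⟩
    have hcomp := hω.comp hseq
    have hev : ∀ᶠ n : ℕ in atTop,
        |(Z (t₀ + e/(n:ℝ)) ω - Z t₀ ω) / |e/(n:ℝ)| ^ q| < 1 := by
      have := Metric.tendsto_nhds.mp hcomp 1 one_pos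
      filter_upwards [this] with n hn
      simp only [Function.comp_apply] at hn
      rwa [Real.dist_eq, sub_zero] at hn
    obtain ⟨N, hN⟩ := eventually_atTop.mp (hev.and (eventually_ge_atTop 2))
    refine Set.mem_iUnion.mpr ⟨N, Set.mem_iInter₂.mpr fun n hn => ?_⟩
    obtain ⟨h1, h2⟩ := hN n hn
    have hn0 : ((n:ℝ)) ≠ 0 := Nat.cast_ne_zero.mpr (by omega)
    have hdpos : (0:ℝ) < |e/(n:ℝ)| ^ q :=
      Real.rpow_pos_of_pos (abs_pos.mpr (div_ne_zero hene hn0)) q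
    rw [abs_div, abs_of_pos hdpos, div_lt_one hdpos] at h1
    show |Z (t₀ + e/(n:ℝ)) ω - Z t₀ ω| ≤ a n
    simp only [ha_def]
    rw [← habs n]
    exact h1.le
  · exact measure_iUnion_null fun N => hInull N

/-- If `f` is continuous on `[0,1]` with `f(t₀) ≠ 0`, the increments of `Z` are
centered Gaussian with variance `∫ f²`, and almost surely the trajectories of `Z` are γ-Hölder
on `[0,1]` for every `γ ∈ (0,1/2)`, then almost surely the pointwise Hölder exponent of the
trajectory of `Z` at `t₀` equals `1/2`. -/
theorem statement6 {Ω : Type*} [MeasurableSpace Ω] (P : Measure Ω) [IsProbabilityMeasure P]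
    (f : ℝ → ℝ) (hf : ContinuousOn f (Set.Icc 0 1))
    (t₀ : ℝ) (ht₀ : t₀ ∈ Set.Icc (0 : ℝ) 1) (hft₀ : f t₀ ≠ 0)
    (Z : ℝ → Ω → ℝ) (hZmeas : ∀ t, Measurable (Z t))
    (hlaw : ∀ t₁ ∈ Set.Icc (0 : ℝ) 1, ∀ t₂ ∈ Set.Icc (0 : ℝ) 1,
      Measure.map (fun ω => Z t₁ ω - Z t₂ ω) P =
        gaussianReal 0 (∫ s in min t₁ t₂..max t₁ t₂, (f s) ^ 2).toNNReal)
    (hHolder : ∀ᵐ ω ∂P, ∀ γ ∈ Set.Ioo (0 : ℝ) (1 / 2),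
      ∃ C : ℝ, ∀ t₁ ∈ Set.Icc (0 : ℝ) 1, ∀ t₂ ∈ Set.Icc (0 : ℝ) 1,
        |Z t₁ ω - Z t₂ ω| ≤ C * |t₁ - t₂| ^ γ) :
    P {ω | pointwiseHolderExp (fun t => Z t ω) t₀ = 1 / 2} = 1 := by
  have hae2 : ∀ᵐ ω ∂P, ∀ qr : ℚ, 1/2 < (qr:ℝ) →
      ¬ Tendsto (fun h : ℝ => (Z (t₀ + h) ω - Z t₀ ω) / |h| ^ (qr:ℝ))
        (nhdsWithin 0 {h : ℝ | h ≠ 0 ∧ t₀ + h ∈ Set.Icc (0:ℝ) 1}) (nhds 0) := by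
    rw [ae_all_iff]
    intro qr
    by_cases hqr : 1/2 < (qr:ℝ)
    · filter_upwards [upper_null P f hf t₀ ht₀ hft₀ Z hZmeas hlaw (qr:ℝ) hqr] with ω hω
      exact fun _ => hω
    · filter_upwards with ω h
      exact absurd h hqr
  have hgoal : ∀ᵐ ω ∂P, pointwiseHolderExp (fun t => Z t ω) t₀ = 1/2 := by
    filter_upwards [hHolder, hae2] with ω hH hup
    unfold pointwiseHolderExp
    set S : Set ℝ := {ρ : ℝ | ρ ∈ Set.Icc (0:ℝ) 1 ∧
      Tendsto (fun h : ℝ => (Z (t₀ + h) ω - Z t₀ ω) / |h| ^ ρ)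
        (nhdsWithin 0 {h : ℝ | h ≠ 0 ∧ t₀ + h ∈ Set.Icc (0:ℝ) 1}) (nhds 0)} with hS_def
    have hbdd : BddAbove S := ⟨1, fun x hx => hx.1.2⟩
    apply le_antisymm
    · apply Real.sSup_le _ (by norm_num)
      intro ρ hρ
      by_contra hgt
      push_neg at hgt
      obtain ⟨qr, hq1, hq2⟩ := exists_rat_btwn hgt
      have hmono : Tendsto (fun h : ℝ => (Z (t₀ + h) ω - Z t₀ ω) / |h| ^ (qr:ℝ))
          (nhdsWithin 0 {h : ℝ | h ≠ 0 ∧ t₀ + h ∈ Set.Icc (0:ℝ) 1}) (nhds 0) :=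
        tendsto_exponent_mono (Y := fun t => Z t ω) (fun h hh => hh.1) hq2.le hρ.2
      exact hup qr hq1 hmono
    · by_contra hlt
      push_neg at hlt
      set m : ℝ := (max (sSup S) 0 + 1/2) / 2 with hm_def
      have hm0 : 0 ≤ m := by positivity
      have hm1 : m < 1/2 := by
        have h1 : max (sSup S) 0 < 1/2 := max_lt hlt (by norm_num)
        rw [hm_def]; linarith
      have hmS : m ∈ S := ⟨⟨hm0, by linarith⟩, lower_mem ht₀ hH hm0 hm1⟩
      have : m ≤ sSup S := le_csSup hbdd hmS
      have h2 : sSup S < m := by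
        have := le_max_left (sSup S) 0
        rw [hm_def]; linarith
      linarith
  have h0 : P {ω | pointwiseHolderExp (fun t => Z t ω) t₀ = 1/2}ᶜ = 0 := by
    have := ae_iff.mp hgoal
    rw [Set.compl_setOf]
    convert this using 2
  calc P {ω | pointwiseHolderExp (fun t => Z t ω) t₀ = 1/2}
      = P Set.univ := measure_congr (ae_eq_univ.mpr h0)
    _ = 1 := measure_univ
end

section
/- Let (Ω, ℱ, ℙ) be a probability space and let {λ_{j,k} : j ∈ ℕ, k ∈ {0, …, 2^j − 1}} be a family of real-valued random variables on Ω such that each λ_{j,k} has the standard Gaussian law N(0,1). Then the random variable C* := sup_{j ∈ ℕ, 0 ≤ k ≤ 2^j − 1} |λ_{j,k}| / √(1 + j) is almost surely finite, and moreover E(C*^p) < ∞ for every real number p > 0. In particular, there is an event Ω* of probability 1 and a positive random variable C* with finite moments of every order such that for all ω ∈ Ω*, all j ∈ ℕ and all k ∈ {0, …, 2^j − 1}, |λ_{j,k}(ω)| ≤ C*(ω) √(1 + j). -/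
open MeasureTheory ProbabilityTheory Set Filter

lemma gauss_tail_right {c : ℝ} (hc : 0 ≤ c) :
    gaussianReal 0 1 {x | c ≤ x} ≤ ENNReal.ofReal (Real.exp (-(c^2)/2)) := by
  rw [gaussianReal_of_var_ne_zero 0 one_ne_zero,
    show {x : ℝ | c ≤ x} = Ici c from rfl, withDensity_apply _ measurableSet_Ici]
  calc ∫⁻ x in Ici c, gaussianPDF 0 1 x
      ≤ ∫⁻ x in Ici c, ENNReal.ofReal (Real.exp (c*x - c^2)) * gaussianPDF 0 1 x := by
        refine setLIntegral_mono' measurableSet_Ici fun x hx => ?_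
        conv_lhs => rw [← one_mul (gaussianPDF 0 1 x)]
        refine mul_le_mul_left ?_ _
        rw [ENNReal.one_le_ofReal]
        rw [Real.one_le_exp_iff]
        nlinarith [mem_Ici.mp hx]
    _ ≤ ∫⁻ x, ENNReal.ofReal (Real.exp (c*x - c^2)) * gaussianPDF 0 1 x :=
        setLIntegral_le_lintegral _ _
    _ = ∫⁻ x, ENNReal.ofReal (Real.exp (-(c^2)/2)) * gaussianPDF c 1 x := by
        refine lintegral_congr fun x => ?_
        simp only [gaussianPDF_def, ← ENNReal.ofReal_mul (Real.exp_nonneg _),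
          ← ENNReal.ofReal_mul (Real.exp_nonneg _)]
        congr 1
        simp only [gaussianPDFReal_def]
        push_cast
        rw [mul_left_comm, mul_left_comm (Real.exp (-(c^2)/2)), ← Real.exp_add,
          ← Real.exp_add]
        congr 2
        ring
    _ = ENNReal.ofReal (Real.exp (-(c^2)/2)) := by
        rw [lintegral_const_mul _ (measurable_gaussianPDF c 1),
          lintegral_gaussianPDF_eq_one c one_ne_zero, mul_one]

lemma gauss_tail_left {c : ℝ} (hc : 0 ≤ c) :
    gaussianReal 0 1 {x | x ≤ -c} ≤ ENNReal.ofReal (Real.exp (-(c^2)/2)) := by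
  have hmap : (gaussianReal 0 1).map (fun x => (-1 : ℝ) * x) = gaussianReal 0 1 := by
    rw [gaussianReal_map_const_mul (-1)]
    norm_num
  have : {x : ℝ | x ≤ -c} = (fun x => (-1:ℝ) * x) ⁻¹' {x | c ≤ x} := by
    ext x; simp; constructor <;> intro h <;> linarith
  rw [this, ← Measure.map_apply (measurable_const_mul _)
    (show MeasurableSet {x : ℝ | c ≤ x} from measurableSet_Ici), hmap]
  exact gauss_tail_right hc

lemma gauss_tail_abs {c : ℝ} (hc : 0 ≤ c) :
    gaussianReal 0 1 {x | c ≤ |x|} ≤ ENNReal.ofReal (2 * Real.exp (-(c^2)/2)) := by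
  have hsub : {x : ℝ | c ≤ |x|} ⊆ {x | c ≤ x} ∪ {x | x ≤ -c} := by
    intro x hx
    rcases abs_cases x with ⟨h, _⟩ | ⟨h, _⟩
    · left; simp only [mem_setOf_eq] at *; linarith
    · right; simp only [mem_setOf_eq] at *; linarith
  calc gaussianReal 0 1 {x | c ≤ |x|} ≤ gaussianReal 0 1 ({x | c ≤ x} ∪ {x | x ≤ -c}) :=
        measure_mono hsub
    _ ≤ gaussianReal 0 1 {x | c ≤ x} + gaussianReal 0 1 {x | x ≤ -c} := measure_union_le _ _
    _ ≤ ENNReal.ofReal (Real.exp (-(c^2)/2)) + ENNReal.ofReal (Real.exp (-(c^2)/2)) :=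
        add_le_add (gauss_tail_right hc) (gauss_tail_left hc)
    _ = ENNReal.ofReal (2 * Real.exp (-(c^2)/2)) := by
        rw [← ENNReal.ofReal_add (Real.exp_nonneg _) (Real.exp_nonneg _), two_mul]


lemma tail_bound {Ω : Type*} [MeasurableSpace Ω] (P : Measure Ω) [IsProbabilityMeasure P]
    (lam : ℕ → ℕ → Ω → ℝ) (hmeas : ∀ j k, Measurable (lam j k))
    (hlaw : ∀ j k, k < 2 ^ j → Measure.map (lam j k) P = gaussianReal 0 1)
    (n : ℕ) (hn : 2 ≤ n) :
    P {ω | (n : ENNReal) < ⨆ (j : ℕ) (k : Fin (2 ^ j)),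
        ENNReal.ofReal (|lam j (k : ℕ) ω| / Real.sqrt (1 + (j : ℝ)))} ≤
      ENNReal.ofReal (4 * Real.exp (-(n:ℝ)^2/2)) := by
  set E := Real.exp (-(n:ℝ)^2/2) with hEdef
  have hE0 : 0 < E := Real.exp_pos _
  have hE : 2 * E ≤ 1/2 := by
    have h1 : (1:ℝ) + 1 ≤ Real.exp 1 := Real.add_one_le_exp 1
    have h2 : E ≤ Real.exp (-2) := by
      apply Real.exp_le_exp.2
      have : (2:ℝ) ≤ n := by exact_mod_cast hn
      nlinarith
    have h3 : Real.exp (-2) ≤ 1/4 := by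
      rw [Real.exp_neg, show Real.exp (2:ℝ) = Real.exp 1 * Real.exp 1 by
        rw [← Real.exp_add]; norm_num]
      rw [inv_le_comm₀ (by positivity) (by norm_num)]
      nlinarith
    linarith
  have hsub : {ω | (n : ENNReal) < ⨆ (j : ℕ) (k : Fin (2 ^ j)),
        ENNReal.ofReal (|lam j (k : ℕ) ω| / Real.sqrt (1 + (j : ℝ)))} ⊆
      ⋃ (j : ℕ), ⋃ (k : Fin (2 ^ j)),
        {ω | (n : ℝ) * Real.sqrt (1 + (j : ℝ)) ≤ |lam j (k : ℕ) ω|} := by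
    intro ω h
    simp only [mem_setOf_eq, lt_iSup_iff] at h
    obtain ⟨j, k, hk⟩ := h
    have hs : 0 < Real.sqrt (1 + (j : ℝ)) := Real.sqrt_pos.2 (by positivity)
    rw [← ENNReal.ofReal_natCast,
      ENNReal.ofReal_lt_ofReal_iff_of_nonneg (Nat.cast_nonneg n)] at hk
    refine mem_iUnion.2 ⟨j, mem_iUnion.2 ⟨k, ?_⟩⟩
    exact ((lt_div_iff₀ hs).mp hk).le
  have hjk : ∀ (j : ℕ) (k : Fin (2 ^ j)),
      P {ω | (n : ℝ) * Real.sqrt (1 + (j : ℝ)) ≤ |lam j (k : ℕ) ω|} ≤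
        ENNReal.ofReal (2 * E * E ^ j) := by
    intro j k
    set c := (n : ℝ) * Real.sqrt (1 + (j : ℝ)) with hc
    have hc0 : 0 ≤ c := by positivity
    have hms : MeasurableSet {x : ℝ | c ≤ |x|} :=
      measurableSet_le measurable_const measurable_abs
    have : P {ω | c ≤ |lam j (k : ℕ) ω|} = gaussianReal 0 1 {x | c ≤ |x|} := by
      rw [← hlaw j k k.2, Measure.map_apply (hmeas j k) hms]; rfl
    rw [this]
    refine (gauss_tail_abs hc0).trans ?_
    apply ENNReal.ofReal_le_ofReal
    have hcsq : c^2 = (n:ℝ)^2 * (1 + j) := by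
      rw [hc, mul_pow, Real.sq_sqrt (by positivity)]
    rw [hcsq]
    have : Real.exp (-((n:ℝ)^2 * (1+j)) / 2) = E * E ^ j := by
      rw [hEdef, ← Real.exp_nat_mul, ← Real.exp_add]
      congr 1; ring
    rw [this, mul_assoc]
  calc P {ω | (n : ENNReal) < ⨆ (j : ℕ) (k : Fin (2 ^ j)),
        ENNReal.ofReal (|lam j (k : ℕ) ω| / Real.sqrt (1 + (j : ℝ)))}
      ≤ ∑' (j : ℕ), ∑' (k : Fin (2 ^ j)),
          P {ω | (n : ℝ) * Real.sqrt (1 + (j : ℝ)) ≤ |lam j (k : ℕ) ω|} :=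
        (measure_mono hsub).trans ((measure_iUnion_le _).trans
          (ENNReal.tsum_le_tsum fun j => measure_iUnion_le _))
    _ ≤ ∑' (j : ℕ), ∑' (_ : Fin (2 ^ j)), ENNReal.ofReal (2 * E * E ^ j) :=
        ENNReal.tsum_le_tsum fun j => ENNReal.tsum_le_tsum fun k => hjk j k
    _ = ∑' (j : ℕ), (2^j : ℕ) * ENNReal.ofReal (2 * E * E ^ j) := by
        congr 1; ext j
        rw [tsum_fintype, Finset.sum_const, Finset.card_univ, Fintype.card_fin, nsmul_eq_mul]
    _ ≤ ∑' (j : ℕ), ENNReal.ofReal (2 * E) * (ENNReal.ofReal (1/2)) ^ j := by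
        refine ENNReal.tsum_le_tsum fun j => ?_
        rw [show ((2^j : ℕ) : ENNReal) = ENNReal.ofReal ((2:ℝ)^j) by
          rw [← ENNReal.ofReal_natCast]; norm_num,
          ← ENNReal.ofReal_mul (by positivity), ← ENNReal.ofReal_pow (by norm_num),
          ← ENNReal.ofReal_mul (by positivity)]
        apply ENNReal.ofReal_le_ofReal
        calc (2:ℝ)^j * (2 * E * E ^ j) = (2*E) * (2*E)^j := by ring
          _ ≤ (2*E) * (1/2)^j := by
              apply mul_le_mul_of_nonneg_left _ (by positivity)
              exact pow_le_pow_left₀ (by positivity) hE j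
    _ = ENNReal.ofReal (2 * E) * (1 - ENNReal.ofReal (1/2))⁻¹ := by
        rw [ENNReal.tsum_mul_left, ENNReal.tsum_geometric]
    _ ≤ ENNReal.ofReal (4 * E) := by
        have : ENNReal.ofReal (1/2 : ℝ) = 2⁻¹ := by
          rw [one_div, ENNReal.ofReal_inv_of_pos (by norm_num)]; norm_num
        rw [this, ENNReal.one_sub_inv_two, inv_inv, ← ENNReal.ofReal_ofNat 2,
          ← ENNReal.ofReal_mul (by positivity)]
        exact ENNReal.ofReal_le_ofReal (le_of_eq (by ring))

lemma moment_bound {Ω : Type*} [MeasurableSpace Ω] (P : Measure Ω) [IsProbabilityMeasure P]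
    (S : Ω → ENNReal) (hS : Measurable S)
    (htail : ∀ n : ℕ, 2 ≤ n →
      P {ω | (n : ENNReal) < S ω} ≤ ENNReal.ofReal (4 * Real.exp (-(n:ℝ)^2/2)))
    (p : ℝ) (hp : 0 < p) : ∫⁻ ω, S ω ^ p ∂P < ⊤ := by
  set g : ℕ → ℝ := fun n => ((n:ℝ)+1)^p * (4 * Real.exp 2 * Real.exp (-(n:ℝ)^2/2)) with hg
  -- uniform tail bound
  have htail' : ∀ n : ℕ, P {ω | (n : ENNReal) < S ω} ≤
      ENNReal.ofReal (4 * Real.exp 2 * Real.exp (-(n:ℝ)^2/2)) := by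
    intro n
    rcases le_or_gt 2 n with hn | hn
    · refine (htail n hn).trans (ENNReal.ofReal_le_ofReal ?_)
      have h1 : (1:ℝ) ≤ Real.exp 2 := Real.one_le_exp (by norm_num)
      nlinarith [Real.exp_pos (-(n:ℝ)^2/2)]
    · have h1 : P {ω | (n : ENNReal) < S ω} ≤ 1 := prob_le_one
      refine h1.trans ?_
      rw [show (1 : ENNReal) = ENNReal.ofReal 1 by simp]
      apply ENNReal.ofReal_le_ofReal
      rw [mul_assoc, ← Real.exp_add]
      have hn' : n ≤ 1 := Nat.lt_succ_iff.mp hn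
      have hn1 : (n:ℝ) ≤ 1 := by exact_mod_cast hn'
      have : (0:ℝ) ≤ 2 + -(n:ℝ)^2/2 := by nlinarith [(Nat.cast_nonneg n : (0:ℝ) ≤ n)]
      nlinarith [Real.one_le_exp this]
  -- pointwise layer bound
  have hpt : ∀ ω, S ω ^ p ≤ ∑' n : ℕ,
      Set.indicator {ω' | (n : ENNReal) < S ω'} (fun _ => ((n : ENNReal)+1) ^ p) ω := by
    intro ω
    rcases eq_or_ne (S ω) 0 with h0 | h0
    · rw [h0, ENNReal.zero_rpow_of_pos hp]; exact zero_le
    rcases eq_or_ne (S ω) ⊤ with htop | htop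
    · have hterm : ∀ n : ℕ, (1 : ENNReal) ≤
          Set.indicator {ω' | (n : ENNReal) < S ω'} (fun _ => ((n : ENNReal)+1) ^ p) ω := by
        intro n
        rw [Set.indicator_of_mem (by simp [htop] : ω ∈ {ω' | (n : ENNReal) < S ω'})]
        calc (1:ENNReal) = 1 ^ p := (ENNReal.one_rpow p).symm
          _ ≤ ((n : ENNReal)+1) ^ p := ENNReal.rpow_le_rpow le_add_self hp.le
      have : (⊤ : ENNReal) ≤ ∑' n : ℕ,
          Set.indicator {ω' | (n : ENNReal) < S ω'} (fun _ => ((n : ENNReal)+1) ^ p) ω := by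
        refine le_trans ?_ (ENNReal.tsum_le_tsum hterm)
        rw [ENNReal.tsum_const_eq_top_of_ne_zero one_ne_zero]
      exact le_trans (le_top : S ω ^ p ≤ ⊤) this
    · set r := (S ω).toReal with hr
      have hr0 : 0 < r := ENNReal.toReal_pos h0 htop
      have hSr : S ω = ENNReal.ofReal r := (ENNReal.ofReal_toReal htop).symm
      set n := ⌈r⌉₊ - 1 with hn
      have hceil : 1 ≤ ⌈r⌉₊ := Nat.one_le_ceil_iff.mpr hr0
      have hn1 : (n : ℕ) + 1 = ⌈r⌉₊ := Nat.succ_pred_eq_of_pos hceil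
      have hmem : ω ∈ {ω' | (n : ENNReal) < S ω'} := by
        have hlt : (n : ℝ) < r := by
          have h2 : (⌈r⌉₊ : ℝ) < r + 1 := Nat.ceil_lt_add_one hr0.le
          have h3 : (n : ℝ) = (⌈r⌉₊ : ℝ) - 1 := by
            rw [hn, Nat.cast_sub hceil]; norm_num
          linarith
        simp only [mem_setOf_eq, hSr, ← ENNReal.ofReal_natCast,
          ENNReal.ofReal_lt_ofReal_iff hr0]
        exact hlt
      have hle : S ω ≤ (n : ENNReal) + 1 := by
        rw [hSr, show ((n : ENNReal) + 1) = ((n+1 : ℕ) : ENNReal) by push_cast; ring,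
          hn1, ← ENNReal.ofReal_natCast]
        exact ENNReal.ofReal_le_ofReal (Nat.le_ceil r)
      calc S ω ^ p ≤ ((n : ENNReal) + 1) ^ p := ENNReal.rpow_le_rpow hle hp.le
        _ = Set.indicator {ω' | (n : ENNReal) < S ω'} (fun _ => ((n : ENNReal)+1) ^ p) ω := by
            rw [Set.indicator_of_mem hmem]
        _ ≤ _ := ENNReal.le_tsum n
  -- summability of g
  have hgsum : Summable g := by
    set m := ⌈p⌉₊ with hm
    have hbase : Summable (fun n : ℕ => (n:ℝ)^m * (Real.exp (-1))^n) :=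
      summable_pow_mul_geometric_of_norm_lt_one m
        (by rw [Real.norm_eq_abs, abs_of_pos (Real.exp_pos _)]
            exact Real.exp_lt_one_iff.mpr (by norm_num))
    have hshift : Summable (fun n : ℕ => ((n+1:ℕ):ℝ)^m * (Real.exp (-1))^(n+1)) :=
      (summable_nat_add_iff (f := fun n : ℕ => (n:ℝ)^m * (Real.exp (-1))^n) 1).mpr hbase
    have hh : Summable (fun n : ℕ => ((n:ℝ)+1)^m * (Real.exp (-1))^n) := by
      have := hshift.mul_left (Real.exp 1)
      refine this.congr fun n => ?_
      push_cast
      rw [pow_succ]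
      rw [show Real.exp 1 * (((n:ℝ)+1)^m * ((Real.exp (-1))^n * Real.exp (-1)))
        = (Real.exp 1 * Real.exp (-1)) * (((n:ℝ)+1)^m * (Real.exp (-1))^n) by ring,
        ← Real.exp_add]
      norm_num
    refine Summable.of_nonneg_of_le (fun n => by positivity)
      (fun n => ?_) (hh.mul_left (4 * Real.exp 2 * Real.exp (1/2)))
    have hb1 : ((n:ℝ)+1)^p ≤ ((n:ℝ)+1)^m := by
      rw [← Real.rpow_natCast ((n:ℝ)+1) m]
      exact Real.rpow_le_rpow_of_exponent_le (by linarith [Nat.cast_nonneg (α := ℝ) n])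
        (Nat.le_ceil p)
    have hb2 : Real.exp (-(n:ℝ)^2/2) ≤ Real.exp (1/2) * (Real.exp (-1))^n := by
      rw [← Real.exp_nat_mul, ← Real.exp_add]
      apply Real.exp_le_exp.2
      nlinarith [sq_nonneg ((n:ℝ) - 1)]
    calc g n = ((n:ℝ)+1)^p * (4 * Real.exp 2 * Real.exp (-(n:ℝ)^2/2)) := rfl
      _ ≤ ((n:ℝ)+1)^m * (4 * Real.exp 2 * (Real.exp (1/2) * (Real.exp (-1))^n)) := by
          apply mul_le_mul hb1 _ (by positivity) (by positivity)
          apply mul_le_mul_of_nonneg_left hb2 (by positivity)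
      _ = 4 * Real.exp 2 * Real.exp (1/2) * (((n:ℝ)+1)^m * (Real.exp (-1))^n) := by ring
  -- put it together
  calc ∫⁻ ω, S ω ^ p ∂P
      ≤ ∫⁻ ω, ∑' n : ℕ,
          Set.indicator {ω' | (n : ENNReal) < S ω'} (fun _ => ((n : ENNReal)+1) ^ p) ω ∂P :=
        lintegral_mono hpt
    _ = ∑' n : ℕ, ∫⁻ ω,
          Set.indicator {ω' | (n : ENNReal) < S ω'} (fun _ => ((n : ENNReal)+1) ^ p) ω ∂P :=
        lintegral_tsum fun n =>
          (measurable_const.indicator (measurableSet_lt measurable_const hS)).aemeasurable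
    _ = ∑' n : ℕ, ((n : ENNReal)+1) ^ p * P {ω | (n : ENNReal) < S ω} := by
        congr 1; ext n
        rw [lintegral_indicator_const (measurableSet_lt measurable_const hS)]
    _ ≤ ∑' n : ℕ, ENNReal.ofReal (g n) := by
        refine ENNReal.tsum_le_tsum fun n => ?_
        rw [hg]
        have h1 : ((n : ENNReal)+1) = ENNReal.ofReal ((n:ℝ)+1) := by
          rw [ENNReal.ofReal_add (Nat.cast_nonneg n) zero_le_one, ENNReal.ofReal_natCast,
            ENNReal.ofReal_one]
        rw [h1, ENNReal.ofReal_rpow_of_pos (by positivity),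
          ENNReal.ofReal_mul (by positivity)]
        exact mul_le_mul_right (htail' n) _
    _ = ENNReal.ofReal (∑' n, g n) :=
        (ENNReal.ofReal_tsum_of_nonneg (fun n => by positivity) hgsum).symm
    _ < ⊤ := ENNReal.ofReal_lt_top



/-- If each `λ_{j,k}` (for `j ∈ ℕ`, `0 ≤ k < 2^j`) is standard Gaussian (no
independence assumed), then `C* := sup_{j,k} |λ_{j,k}|/√(1+j)` is a.s. finite with finite
moments of every order; in particular there are an event `Ω*` of probability 1 and a positive
random variable `C*` with finite moments of every order such that
`|λ_{j,k}(ω)| ≤ C*(ω) √(1+j)` for all `ω ∈ Ω*`, `j ∈ ℕ`, `0 ≤ k < 2^j`. -/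
theorem statement7 {Ω : Type*} [MeasurableSpace Ω] (P : Measure Ω) [IsProbabilityMeasure P]
    (lam : ℕ → ℕ → Ω → ℝ) (hmeas : ∀ j k, Measurable (lam j k))
    (hlaw : ∀ j k, k < 2 ^ j → Measure.map (lam j k) P = gaussianReal 0 1) :
    (∀ᵐ ω ∂P,
      (⨆ (j : ℕ) (k : Fin (2 ^ j)),
        ENNReal.ofReal (|lam j (k : ℕ) ω| / Real.sqrt (1 + (j : ℝ)))) < ⊤) ∧
    (∀ p : ℝ, 0 < p →
      ∫⁻ ω, (⨆ (j : ℕ) (k : Fin (2 ^ j)),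
        ENNReal.ofReal (|lam j (k : ℕ) ω| / Real.sqrt (1 + (j : ℝ)))) ^ p ∂P < ⊤) ∧
    ∃ (Ωstar : Set Ω) (Cstar : Ω → ℝ),
      P Ωstar = 1 ∧ (∀ ω, 0 < Cstar ω) ∧
      (∀ p : ℝ, 0 < p → ∫⁻ ω, ENNReal.ofReal (Cstar ω ^ p) ∂P < ⊤) ∧
      ∀ ω ∈ Ωstar, ∀ j k : ℕ, k < 2 ^ j →
        |lam j k ω| ≤ Cstar ω * Real.sqrt (1 + (j : ℝ)) := by
  set S : Ω → ENNReal := fun ω => ⨆ (j : ℕ) (k : Fin (2 ^ j)),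
    ENNReal.ofReal (|lam j (k : ℕ) ω| / Real.sqrt (1 + (j : ℝ))) with hSdef
  have hSmeas : Measurable S := by
    apply Measurable.iSup; intro j; apply Measurable.iSup; intro k
    exact ((hmeas j (k : ℕ)).abs.div_const _).ennreal_ofReal
  have htail : ∀ n : ℕ, 2 ≤ n →
      P {ω | (n : ENNReal) < S ω} ≤ ENNReal.ofReal (4 * Real.exp (-(n:ℝ)^2/2)) := by
    intro n hn
    exact tail_bound P lam hmeas hlaw n hn
  have part2 : ∀ p : ℝ, 0 < p → ∫⁻ ω, S ω ^ p ∂P < ⊤ :=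
    fun p hp => moment_bound P S hSmeas htail p hp
  have part1 : ∀ᵐ ω ∂P, S ω < ⊤ := by
    have h := part2 1 one_pos
    simp only [ENNReal.rpow_one] at h
    exact ae_lt_top hSmeas h.ne
  refine ⟨part1, part2, {ω | S ω < ⊤}, fun ω => (S ω).toReal + 1, ?_, ?_, ?_, ?_⟩
  · rw [← prob_compl_eq_zero_iff (measurableSet_lt hSmeas measurable_const)]
    rw [ae_iff] at part1
    rw [← part1, compl_setOf]
  · intro ω; positivity
  · intro p hp
    have hpw : ∀ ω, ENNReal.ofReal (((S ω).toReal + 1) ^ p) ≤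
        (2:ENNReal) ^ p * (S ω ^ p + 1) := by
      intro ω
      rw [← ENNReal.ofReal_rpow_of_pos (by positivity)]
      have h1 : ENNReal.ofReal ((S ω).toReal + 1) ≤ 2 * max (S ω) 1 := by
        rw [ENNReal.ofReal_add ENNReal.toReal_nonneg zero_le_one, ENNReal.ofReal_one, two_mul]
        exact add_le_add (ENNReal.ofReal_toReal_le.trans (le_max_left _ _)) (le_max_right _ _)
      calc ENNReal.ofReal ((S ω).toReal + 1) ^ p ≤ (2 * max (S ω) 1) ^ p :=
            ENNReal.rpow_le_rpow h1 hp.le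
        _ = (2:ENNReal) ^ p * (max (S ω) 1) ^ p := ENNReal.mul_rpow_of_nonneg _ _ hp.le
        _ ≤ (2:ENNReal) ^ p * (S ω ^ p + 1) := by
            refine mul_le_mul_right ?_ _
            rcases le_total (S ω) 1 with h | h
            · rw [max_eq_right h, ENNReal.one_rpow]; exact le_add_self
            · rw [max_eq_left h]; exact le_add_right le_rfl
    have h2top : ((2:ENNReal) ^ p) ≠ ⊤ :=
      ENNReal.rpow_ne_top_of_nonneg hp.le (by norm_num)
    calc ∫⁻ ω, ENNReal.ofReal (((S ω).toReal + 1) ^ p) ∂P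
        ≤ ∫⁻ ω, (2:ENNReal) ^ p * (S ω ^ p + 1) ∂P := lintegral_mono hpw
      _ = (2:ENNReal) ^ p * (∫⁻ ω, S ω ^ p ∂P + 1) := by
          rw [lintegral_const_mul' _ _ h2top, lintegral_add_right' _ aemeasurable_const,
            lintegral_const, measure_univ, mul_one]
      _ < ⊤ := by
          refine ENNReal.mul_lt_top h2top.lt_top ?_
          exact ENNReal.add_lt_top.mpr ⟨part2 p hp, ENNReal.one_lt_top⟩
  · intro ω hω j k hk
    have hs : 0 < Real.sqrt (1 + (j:ℝ)) := Real.sqrt_pos.2 (by positivity)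
    have hfin : S ω ≠ ⊤ := (mem_setOf_eq ▸ hω).ne
    have hle : ENNReal.ofReal (|lam j k ω| / Real.sqrt (1 + (j:ℝ))) ≤ S ω := by
      rw [hSdef]
      exact le_iSup_of_le j (le_iSup_of_le (⟨k, hk⟩ : Fin (2^j)) le_rfl)
    have h2 : |lam j k ω| / Real.sqrt (1 + (j:ℝ)) ≤ (S ω).toReal :=
      (ENNReal.ofReal_le_iff_le_toReal hfin).mp hle
    have h3 : |lam j k ω| ≤ (S ω).toReal * Real.sqrt (1 + (j:ℝ)) :=
      (div_le_iff₀ hs).mp h2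
    refine h3.trans ?_
    exact mul_le_mul_of_nonneg_right (le_add_of_nonneg_right zero_le_one)
      (Real.sqrt_nonneg _)
end

section
/- Let α ∈ (0, 1], C_g ≥ 0, and let g : [0,1] → ℝ be a function satisfying |g(s₁) − g(s₂)| ≤ C_g |s₁ − s₂|^α for all s₁, s₂ ∈ [0,1]. For j ∈ ℕ, k ∈ {0, …, 2^j − 1} and t ∈ [0,1], set a_{j,k}(t) = ∫₀^t g(s) ψ_{j,k}(s) ds. Then for every j ∈ ℕ, every k ∈ {0, …, 2^j − 1} and every t ∈ [0,1] with t ≥ (k+1)/2^j, one has |a_{j,k}(t)| ≤ C_g 2^{−j(α + 1/2)}. -/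
open MeasureTheory Set

/-- The Haar wavelet `ψ_{j,k} = 2^{j/2} (𝟙_{[k/2^j,(2k+1)/2^{j+1})} − 𝟙_{[(2k+1)/2^{j+1},(k+1)/2^j)})`. -/
noncomputable def haarPsi (j k : ℕ) (s : ℝ) : ℝ :=
  2 ^ ((j : ℝ) / 2) *
    ((Set.Ico ((k : ℝ) / 2 ^ j) ((2 * (k : ℝ) + 1) / 2 ^ (j + 1))).indicator 1 s -
      (Set.Ico ((2 * (k : ℝ) + 1) / 2 ^ (j + 1)) (((k : ℝ) + 1) / 2 ^ j)).indicator 1 s)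

lemma haarPsi_measurable (j k : ℕ) : Measurable (haarPsi j k) := by
  unfold haarPsi
  exact measurable_const.mul
    (((measurable_const.indicator measurableSet_Ico).sub
      (measurable_const.indicator measurableSet_Ico)))

lemma abs_haarPsi_le (j k : ℕ) (s : ℝ) : |haarPsi j k s| ≤ 2 ^ ((j : ℝ) / 2) := by
  have hc : (0:ℝ) < 2 ^ ((j : ℝ) / 2) := Real.rpow_pos_of_pos (by norm_num) _
  unfold haarPsi
  rw [abs_mul, abs_of_pos hc]
  nth_rewrite 2 [← mul_one ((2:ℝ) ^ ((j : ℝ) / 2))]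
  apply mul_le_mul_of_nonneg_left _ hc.le
  rw [Set.indicator_apply, Set.indicator_apply]
  split_ifs <;> norm_num

lemma haarPsi_of_lt {j k : ℕ} {s : ℝ} (h : s < (k : ℝ) / 2 ^ j) : haarPsi j k s = 0 := by
  have ham : (k : ℝ) / 2 ^ j ≤ (2 * (k : ℝ) + 1) / 2 ^ (j + 1) := by
    rw [div_le_div_iff₀ (by positivity) (by positivity)]
    have h2 : (2:ℝ) ^ (j+1) = 2 * 2 ^ j := by ring
    rw [h2]; nlinarith [pow_pos (by norm_num : (0:ℝ) < 2) j]
  unfold haarPsi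
  rw [Set.indicator_of_notMem (by simp only [Set.mem_Ico, not_and, not_lt]; intro h'; linarith),
    Set.indicator_of_notMem (by simp only [Set.mem_Ico, not_and, not_lt]; intro h'; linarith)]
  ring

lemma haarPsi_of_ge {j k : ℕ} {s : ℝ} (h : ((k : ℝ) + 1) / 2 ^ j ≤ s) : haarPsi j k s = 0 := by
  have hmb : (2 * (k : ℝ) + 1) / 2 ^ (j + 1) ≤ ((k : ℝ) + 1) / 2 ^ j := by
    rw [div_le_div_iff₀ (by positivity) (by positivity)]
    have h2 : (2:ℝ) ^ (j+1) = 2 * 2 ^ j := by ring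
    rw [h2]; nlinarith [pow_pos (by norm_num : (0:ℝ) < 2) j]
  unfold haarPsi
  rw [Set.indicator_of_notMem (by simp only [Set.mem_Ico, not_and, not_lt]; intro h'; linarith),
    Set.indicator_of_notMem (by simp only [Set.mem_Ico, not_and, not_lt]; intro h'; linarith)]
  ring

lemma haarPsi_left {j k : ℕ} {s : ℝ} (h1 : (k : ℝ) / 2 ^ j ≤ s)
    (h2 : s < (2 * (k : ℝ) + 1) / 2 ^ (j + 1)) : haarPsi j k s = 2 ^ ((j : ℝ) / 2) := by
  unfold haarPsi
  rw [Set.indicator_of_mem (show s ∈ Set.Ico ((k : ℝ) / 2 ^ j)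
      ((2 * (k : ℝ) + 1) / 2 ^ (j + 1)) from ⟨h1, h2⟩),
    Set.indicator_of_notMem (by
      simp only [Set.mem_Ico, not_and, not_lt]; intro h'; linarith)]
  simp

lemma haarPsi_right {j k : ℕ} {s : ℝ} (h1 : (2 * (k : ℝ) + 1) / 2 ^ (j + 1) ≤ s)
    (h2 : s < ((k : ℝ) + 1) / 2 ^ j) : haarPsi j k s = -(2 ^ ((j : ℝ) / 2)) := by
  unfold haarPsi
  rw [Set.indicator_of_notMem (show s ∉ Set.Ico ((k : ℝ) / 2 ^ j)
      ((2 * (k : ℝ) + 1) / 2 ^ (j + 1)) by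
        simp only [Set.mem_Ico, not_and, not_lt]; intro h'; linarith),
    Set.indicator_of_mem (show s ∈ Set.Ico ((2 * (k : ℝ) + 1) / 2 ^ (j + 1))
      (((k : ℝ) + 1) / 2 ^ j) from ⟨h1, h2⟩)]
  simp

/-- If `g : [0,1] → ℝ` is α-Hölder with constant `C_g` (`α ∈ (0,1]`), then the
Haar coefficient functions `a_{j,k}(t) = ∫₀^t g(s) ψ_{j,k}(s) ds` satisfy
`|a_{j,k}(t)| ≤ C_g 2^{−j(α+1/2)}` whenever `t ∈ [0,1]` and `t ≥ (k+1)/2^j`. -/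
theorem statement8 (α : ℝ) (hα0 : 0 < α) (hα1 : α ≤ 1) (Cg : ℝ) (hCg : 0 ≤ Cg)
    (g : ℝ → ℝ)
    (hg : ∀ s₁ ∈ Set.Icc (0 : ℝ) 1, ∀ s₂ ∈ Set.Icc (0 : ℝ) 1,
      |g s₁ - g s₂| ≤ Cg * |s₁ - s₂| ^ α) :
    ∀ (j k : ℕ), k < 2 ^ j → ∀ t ∈ Set.Icc (0 : ℝ) 1,
      ((k : ℝ) + 1) / 2 ^ j ≤ t →
      |∫ s in (0 : ℝ)..t, g s * haarPsi j k s| ≤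
        Cg * 2 ^ (-(j : ℝ) * (α + 1 / 2)) := by
  -- continuity of g on [0,1]
  have hgc : ContinuousOn g (Set.Icc (0:ℝ) 1) := by
    have hold : HolderOnWith Cg.toNNReal α.toNNReal g (Set.Icc 0 1) := by
      intro x hx y hy
      rw [edist_dist, edist_dist, Real.dist_eq, Real.dist_eq]
      have h1 : ((α.toNNReal : ℝ)) = α := Real.coe_toNNReal α hα0.le
      rw [h1, ENNReal.ofReal_rpow_of_nonneg (abs_nonneg _) hα0.le]
      have h2 : ((Cg.toNNReal : ENNReal)) = ENNReal.ofReal Cg := by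
        simp [ENNReal.ofReal]
      rw [h2, ← ENNReal.ofReal_mul hCg]
      exact ENNReal.ofReal_le_ofReal (hg x hx y hy)
    exact hold.continuousOn (Real.toNNReal_pos.2 hα0)
  have hgint : IntegrableOn g (Set.Icc (0:ℝ) 1) := hgc.integrableOn_Icc
  intro j k hk t ht htk
  obtain ⟨ht0, ht1⟩ := ht
  have h2j : (0:ℝ) < 2 ^ j := by positivity
  have h2j1 : (0:ℝ) < 2 ^ (j+1) := by positivity
  have hpow : (2:ℝ) ^ (j+1) = 2 * 2 ^ j := by ring
  set q : ℝ := 1 / 2 ^ (j+1) with hqdef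
  set a : ℝ := (k : ℝ) / 2 ^ j with hadef
  set m : ℝ := (2 * (k : ℝ) + 1) / 2 ^ (j+1) with hmdef
  set b : ℝ := ((k : ℝ) + 1) / 2 ^ j with hbdef
  have hq0 : 0 < q := by rw [hqdef]; positivity
  have hma : m = a + q := by
    rw [hmdef, hadef, hqdef, hpow]; field_simp
  have hbm : b = m + q := by
    rw [hbdef, hmdef, hqdef, hpow]; field_simp; ring
  have ha0 : 0 ≤ a := by rw [hadef]; positivity
  have hbt : b ≤ t := htk
  have hb1 : b ≤ 1 := le_trans hbt ht1
  have ham : a ≤ m := by linarith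
  have hmb : m ≤ b := by linarith
  have hm1 : m ≤ 1 := le_trans hmb hb1
  have hb0 : 0 ≤ b := le_trans ha0 (le_trans ham hmb)
  set c : ℝ := 2 ^ ((j : ℝ) / 2) with hcdef
  have hc0 : (0:ℝ) < c := Real.rpow_pos_of_pos (by norm_num) _
  set F : ℝ → ℝ := fun s => g s * haarPsi j k s with hFdef
  -- integrability of F on subintervals of [0,1]
  have hGint : ∀ u v : ℝ, 0 ≤ u → u ≤ v → v ≤ 1 →
      IntervalIntegrable F volume u v := by
    intro u v hu huv hv1
    rw [intervalIntegrable_iff_integrableOn_Ioc_of_le huv]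
    have hgI : IntegrableOn g (Set.Ioc u v) :=
      hgint.mono_set (fun x hx => ⟨le_trans hu hx.1.le, le_trans hx.2 hv1⟩)
    have hbm : IntegrableOn (fun s => haarPsi j k s * g s) (Set.Ioc u v) := by
      apply Integrable.bdd_mul (c := c) hgI ((haarPsi_measurable j k).aestronglyMeasurable.restrict)
      exact Filter.Eventually.of_forall (fun x => by rw [Real.norm_eq_abs]; exact abs_haarPsi_le j k x)
    exact hbm.congr_fun (fun x _ => mul_comm _ _) measurableSet_Ioc
  -- a.e. avoiding a point
  have hne : ∀ p : ℝ, ∀ᵐ x : ℝ ∂(volume), x ≠ p := by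
    intro p
    rw [ae_iff]
    simpa using measure_singleton (α := ℝ) p
  -- splitting
  have e1 := intervalIntegral.integral_add_adjacent_intervals
    (hGint 0 a le_rfl ha0 (by linarith)) (hGint a t ha0 (by linarith) ht1)
  have e2 := intervalIntegral.integral_add_adjacent_intervals
    (hGint a m ha0 ham (by linarith)) (hGint m t (by linarith) (by linarith) ht1)
  have e3 := intervalIntegral.integral_add_adjacent_intervals
    (hGint m b (by linarith) hmb (by linarith)) (hGint b t hb0 hbt ht1)
  -- the four pieces
  have hz1 : (∫ s in (0:ℝ)..a, F s) = 0 := by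
    have h0 : (∫ s in (0:ℝ)..a, F s) = ∫ s in (0:ℝ)..a, (0:ℝ) := by
      apply intervalIntegral.integral_congr_ae
      filter_upwards [hne a] with x hxa hx
      rw [Set.uIoc_of_le ha0] at hx
      have : x < a := lt_of_le_of_ne hx.2 hxa
      simp [hFdef, haarPsi_of_lt this]
    rw [h0]; simp
  have hz4 : (∫ s in b..t, F s) = 0 := by
    have h0 : (∫ s in b..t, F s) = ∫ s in b..t, (0:ℝ) := by
      apply intervalIntegral.integral_congr_ae
      filter_upwards [] with x hx
      rw [Set.uIoc_of_le hbt] at hx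
      simp [hFdef, haarPsi_of_ge hx.1.le]
    rw [h0]; simp
  have hp2 : (∫ s in a..m, F s) = c * ∫ s in a..m, g s := by
    rw [← intervalIntegral.integral_const_mul]
    apply intervalIntegral.integral_congr_ae
    filter_upwards [hne m] with x hxm hx
    rw [Set.uIoc_of_le ham] at hx
    have hxltm : x < m := lt_of_le_of_ne hx.2 hxm
    simp [hFdef, haarPsi_left hx.1.le hxltm, mul_comm, hcdef]
  have hp3 : (∫ s in m..b, F s) = -(c * ∫ s in m..b, g s) := by
    rw [← intervalIntegral.integral_const_mul, ← intervalIntegral.integral_neg]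
    apply intervalIntegral.integral_congr_ae
    filter_upwards [hne b] with x hxb hx
    rw [Set.uIoc_of_le hmb] at hx
    have hxltb : x < b := lt_of_le_of_ne hx.2 hxb
    simp only [hFdef, haarPsi_right hx.1.le hxltb]
    ring
  -- shift identity
  have hshift : (∫ s in m..b, g s) = ∫ s in a..m, g (s + q) := by
    rw [intervalIntegral.integral_comp_add_right, hma, hbm, hma]
  -- integrability for the subtraction
  have hgam : IntervalIntegrable g volume a m := by
    apply MeasureTheory.IntegrableOn.intervalIntegrable
    apply hgint.mono_set
    rw [Set.uIcc_of_le ham]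
    exact Set.Icc_subset_Icc ha0 hm1
  have hgmb : IntervalIntegrable g volume m b := by
    apply MeasureTheory.IntegrableOn.intervalIntegrable
    apply hgint.mono_set
    rw [Set.uIcc_of_le hmb]
    exact Set.Icc_subset_Icc (by linarith) hb1
  have hgsh : IntervalIntegrable (fun s => g (s + q)) volume a m := by
    have h0 := hgmb.comp_add_right q
    rwa [show m - q = a by linarith, show b - q = m by linarith] at h0
  have hsub : (∫ s in a..m, g s) - (∫ s in a..m, g (s + q)) =
      ∫ s in a..m, (g s - g (s + q)) := (intervalIntegral.integral_sub hgam hgsh).symm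
  -- total value of the integral
  have htot : (∫ s in (0:ℝ)..t, F s) = c * ∫ s in a..m, (g s - g (s + q)) := by
    have h0 : (∫ s in (0:ℝ)..t, F s) =
        (∫ s in (0:ℝ)..a, F s) + (∫ s in a..m, F s) + (∫ s in m..b, F s)
          + (∫ s in b..t, F s) := by
      rw [← e1, ← e2, ← e3]; ring
    rw [h0, hz1, hz4, hp2, hp3, hshift, ← hsub]; ring
  -- the pointwise Hölder bound
  have hbound : ∀ x ∈ Set.uIoc a m, ‖g x - g (x + q)‖ ≤ Cg * q ^ α := by
    intro x hx
    rw [Set.uIoc_of_le ham] at hx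
    have hx1 : x ∈ Set.Icc (0:ℝ) 1 := ⟨le_trans ha0 hx.1.le, le_trans hx.2 hm1⟩
    have hx2 : x + q ∈ Set.Icc (0:ℝ) 1 := ⟨by linarith [hx1.1], by linarith [hx.2]⟩
    have h0 := hg x hx1 (x + q) hx2
    rw [Real.norm_eq_abs]
    calc |g x - g (x + q)| ≤ Cg * |x - (x + q)| ^ α := h0
      _ = Cg * q ^ α := by rw [show x - (x + q) = -q by ring, abs_neg, abs_of_pos hq0]
  have hkey : ‖∫ s in a..m, (g s - g (s + q))‖ ≤ (Cg * q ^ α) * |m - a| :=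
    intervalIntegral.norm_integral_le_of_norm_le_const hbound
  rw [Real.norm_eq_abs, show |m - a| = q by rw [hma]; simp [abs_of_pos hq0]] at hkey
  -- final arithmetic
  have hq' : q = (2:ℝ) ^ (-((j:ℝ) + 1)) := by
    rw [Real.rpow_neg (by norm_num : (0:ℝ) ≤ 2),
      show ((j:ℝ) + 1) = ((j + 1 : ℕ) : ℝ) by push_cast; ring, Real.rpow_natCast,
      hqdef, one_div]
  have hfinal : c * (Cg * q ^ α * q) ≤ Cg * 2 ^ (-(j:ℝ) * (α + 1/2)) := by
    have heq : c * (Cg * q ^ α * q) =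
        Cg * (2:ℝ) ^ ((j:ℝ)/2 + (-((j:ℝ) + 1)) * α + (-((j:ℝ) + 1))) := by
      rw [hq', hcdef, ← Real.rpow_mul (by norm_num : (0:ℝ) ≤ 2),
        show (2:ℝ) ^ ((j:ℝ)/2 + (-((j:ℝ) + 1)) * α + (-((j:ℝ) + 1))) =
          2 ^ ((j:ℝ)/2) * 2 ^ ((-((j:ℝ) + 1)) * α) * 2 ^ (-((j:ℝ) + 1)) by
            rw [Real.rpow_add (by norm_num : (0:ℝ) < 2),
              Real.rpow_add (by norm_num : (0:ℝ) < 2)]]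
      ring
    rw [heq]
    apply mul_le_mul_of_nonneg_left _ hCg
    apply (Real.rpow_le_rpow_left_iff (by norm_num : (1:ℝ) < 2)).2
    nlinarith [Nat.cast_nonneg (α := ℝ) j, hα0.le]
  calc |∫ s in (0:ℝ)..t, F s| = c * |∫ s in a..m, (g s - g (s + q))| := by
        rw [htot, abs_mul, abs_of_pos hc0]
    _ ≤ c * (Cg * q ^ α * q) := mul_le_mul_of_nonneg_left hkey hc0.le
    _ ≤ Cg * 2 ^ (-(j:ℝ) * (α + 1/2)) := hfinal
end
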